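/- Let N ≥ 8 be an even integer and s, t ∈ ℂ nonzero with s⁴ ≠ 1. Write y = t² and z = s², and define a = (s² − t²)/(s t), b = (1 − s²t²)/(s t), c = (1 − t⁴)/t². Define F(z) = (z − y)^{N−1}(zy³ − 1)(z²y⁴ − 1) + (zy − 1)^{N−1}(z − y³)(z² − y⁴). Then: (i) as a polynomial in z (for each fixed nonzero y), F(z) is divisible by z² − 1; and (ii) (s t)^{−N} · F(s²) / (t⁶(s⁴ − 1)) = a⁴b⁴(a^{N−8} + b^{N−8}) − a²b²c²(a^{N−6} + b^{N−6}) + 2a⁴b⁴c²·S_{N−8} − 3a²b²c⁴·S_{N−6} + c⁶·S_{N−4}, where S_m = Σ_{j=0}^{(m−2)/2} a^{2j} b^{m−2−2j} for even m ≥ 2 and S₀ = 0 (so that (a² − b²)·S_m = a^m − b^m). -/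

import Mathlib

open Polynomial

noncomputable def F4 (N : ℕ) (y : ℂ) : Polynomial ℂ :=
  (X - C y)^(N-1) * (X * C y^3 - 1) * (X^2 * C y^4 - 1)
    + (X * C y - 1)^(N-1) * (X - C y^3) * (X^2 - C y^4)

noncomputable def Seven (a b : ℂ) (m : ℕ) : ℂ :=
  ∑ j ∈ Finset.range (m/2), a^(2*j) * b^(m-2-2*j)

lemma seven_mul (a b : ℂ) (k : ℕ) :
    (a^2 - b^2) * Seven a b (2*k) = a^(2*k) - b^(2*k) := by
  induction k with
  | zero => simp [Seven]
  | succ k ih =>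
    have h : Seven a b (2*(k+1)) = b^2 * Seven a b (2*k) + a^(2*k) := by
      unfold Seven
      rw [Nat.mul_div_cancel_left _ two_pos, Nat.mul_div_cancel_left _ two_pos,
        Finset.sum_range_succ]
      rw [show 2*(k+1)-2-2*k = 0 by omega, pow_zero, mul_one, Finset.mul_sum]
      congr 1
      refine Finset.sum_congr rfl fun j hj => ?_
      have hj' : j < k := Finset.mem_range.mp hj
      rw [show 2*(k+1)-2-2*j = (2*k-2-2*j)+2 by omega, pow_add]
      ring
    rw [h]
    linear_combination b^2 * ih

set_option maxHeartbeats 1600000 in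
theorem n4_boundPair_eigenvalue_identity (N : ℕ) (hN : 8 ≤ N) (hNeven : Even N)
    (s t : ℂ) (hs : s ≠ 0) (ht : t ≠ 0) (hs4 : s^4 ≠ 1) (a b c : ℂ)
    (ha : a = (s^2 - t^2)/(s*t)) (hb : b = (1 - s^2*t^2)/(s*t))
    (hc : c = (1 - t^4)/t^2) :
    ((X^2 - 1 : Polynomial ℂ) ∣ F4 N (t^2)) ∧
      ((s*t)^N)⁻¹ * (F4 N (t^2)).eval (s^2) / (t^6 * (s^4 - 1)) =
        a^4*b^4*(a^(N-8) + b^(N-8)) - a^2*b^2*c^2*(a^(N-6) + b^(N-6))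
          + 2*a^4*b^4*c^2 * Seven a b (N-8) - 3*a^2*b^2*c^4 * Seven a b (N-6)
          + c^6 * Seven a b (N-4) := by
  obtain ⟨m, hm⟩ := hNeven
  have hodd : Odd (N-1) := ⟨m - 1, by omega⟩
  have hst : s * t ≠ 0 := mul_ne_zero hs ht
  have hs41 : s^4 - 1 ≠ 0 := sub_ne_zero.mpr hs4
  constructor
  · -- divisibility
    have h1 : (F4 N (t^2)).IsRoot 1 := by
      simp only [IsRoot, F4, eval_add, eval_mul, eval_sub, eval_pow, eval_one, eval_X,
        eval_C, one_mul, one_pow]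
      rw [show (1 - t^2 : ℂ) = -(t^2 - 1) by ring, hodd.neg_pow]
      ring
    have h2 : (F4 N (t^2)).IsRoot (-1) := by
      simp only [IsRoot, F4, eval_add, eval_mul, eval_sub, eval_pow, eval_one, eval_X,
        eval_C]
      rw [show (-1 - t^2 : ℂ) = (-1*t^2 - 1) by ring]
      ring
    have hd : (X - C (1:ℂ)) * (X - C (-1)) ∣ F4 N (t^2) :=
      (Polynomial.isCoprime_X_sub_C_of_isUnit_sub (by norm_num)).mul_dvd
        (dvd_iff_isRoot.mpr h1) (dvd_iff_isRoot.mpr h2)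
    have e : (X^2 - 1 : Polynomial ℂ) = (X - C 1) * (X - C (-1)) := by
      simp only [map_one, map_neg]
      ring
    rw [e]; exact hd
  · -- eigenvalue identity
    have hsa : s^2 - t^2 = s*t*a := by rw [ha]; field_simp
    have hsb : s^2*t^2 - 1 = -(s*t*b) := by rw [hb]; field_simp; ring
    have hp : (s*t)^(N-1) ≠ 0 := pow_ne_zero _ hst
    have hseval : (F4 N (t^2)).eval (s^2) =
        (s*t)^(N-1) * (a^(N-1) * ((s^2*t^6-1)*(s^4*t^8-1))
          - b^(N-1) * ((s^2-t^6)*(s^4-t^8))) := by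
      simp only [F4, eval_add, eval_mul, eval_sub, eval_pow, eval_one, eval_X, eval_C]
      rw [hsa, hsb, mul_pow (s*t) a, hodd.neg_pow, mul_pow (s*t) b]
      ring
    have hred : ∀ K : ℂ, ((s*t)^(N-1)*(s*t))⁻¹ * ((s*t)^(N-1) * K) / (t^6*(s^4-1))
        = K / (s*t*(t^6*(s^4-1))) := by
      intro K
      rw [mul_inv]
      field_simp
    rw [hseval, show (s*t)^N = (s*t)^(N-1)*(s*t) by rw [← pow_succ]; congr 1; omega,
      hred]
    obtain ⟨k, hk⟩ : ∃ k, N - 8 = 2*k := ⟨(N-8)/2, by omega⟩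
    by_cases hdeg : t^4 = 1
    · -- degenerate case: c = 0
      have hc0 : c = 0 := by rw [hc, hdeg]; simp
      have hbA : b = -(a*t^2) := by
        rw [ha, hb]; field_simp; linear_combination -hdeg
      have h6 : (t:ℂ)^6 = t^2 := by
        rw [show (t:ℂ)^6 = t^4*t^2 by ring, hdeg, one_mul]
      have h8 : (t:ℂ)^8 = 1 := by
        rw [show (t:ℂ)^8 = (t^4)^2 by ring, hdeg, one_pow]
      have hA7 : a^(N-1) = a^(N-8)*a^7 := by
        rw [show N-1 = (N-8)+7 by omega, pow_add]
      have hb1 : b^(N-1) = -(a^(N-1) * t^2) := by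
        rw [hbA, hodd.neg_pow, mul_pow, show N-1 = 2*k+7 by omega]
        rw [show ((t:ℂ)^2)^(2*k+7) = (t^4)^(k+3)*t^2 by ring, hdeg, one_pow]
        ring
      have hb8 : b^(N-8) = a^(N-8) := by
        rw [hbA, hk, Even.neg_pow ⟨k, by ring⟩,
          show ((a*t^2))^(2*k) = (a^(2*k))*((t^4)^k) by ring, hdeg]
        ring
      have hb4 : b^4 = a^4 := by
        rw [hbA, show (-(a*t^2))^4 = a^4*(t^4)^2 by ring, hdeg]; ring
      have hsb' : s^2*t^2 - 1 = s*t*a*t^2 := by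
        rw [hsb, hbA]; ring
      have hdd : s*t*(t^2*(s^4-1)) ≠ 0 :=
        mul_ne_zero hst (mul_ne_zero (pow_ne_zero _ ht) hs41)
      rw [hc0, hb1, hA7, h6, h8, hsb', hsa, hb8, hb4]
      generalize a^(N-8) = A
      rw [div_eq_iff hdd]
      ring
    · -- nondegenerate case
      have h1t4 : 1 - t^4 ≠ 0 := sub_ne_zero.mpr fun h => hdeg h.symm
      have hd2 : (s^4-1)*(1-t^4) ≠ 0 := mul_ne_zero hs41 h1t4
      have habv2 : (a^2 - b^2)*(s^2*t^2) = (s^4-1)*(1-t^4) := by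
        rw [ha, hb]; field_simp; ring
      have hS8 : Seven a b (N-8)
          = (a^(2*k) - b^(2*k))*(s^2*t^2)/((s^4-1)*(1-t^4)) := by
        rw [hk, eq_div_iff hd2]
        linear_combination (s^2*t^2) * seven_mul a b k - Seven a b (2*k) * habv2
      have hS6 : Seven a b (N-6)
          = (a^(2*k)*a^2 - b^(2*k)*b^2)*(s^2*t^2)/((s^4-1)*(1-t^4)) := by
        rw [show N-6 = 2*(k+1) by omega, eq_div_iff hd2]
        linear_combination (s^2*t^2) * seven_mul a b (k+1)
          - Seven a b (2*(k+1)) * habv2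
      have hS4 : Seven a b (N-4)
          = (a^(2*k)*a^4 - b^(2*k)*b^4)*(s^2*t^2)/((s^4-1)*(1-t^4)) := by
        rw [show N-4 = 2*(k+2) by omega, eq_div_iff hd2]
        linear_combination (s^2*t^2) * seven_mul a b (k+2)
          - Seven a b (2*(k+2)) * habv2
      have e1 : a^(N-1) = a^(2*k)*a^7 := by rw [show N-1 = 2*k+7 by omega, pow_add]
      have e2 : b^(N-1) = b^(2*k)*b^7 := by rw [show N-1 = 2*k+7 by omega, pow_add]
      have e3 : a^(N-6) = a^(2*k)*a^2 := by rw [show N-6 = 2*k+2 by omega, pow_add]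
      have e4 : b^(N-6) = b^(2*k)*b^2 := by rw [show N-6 = 2*k+2 by omega, pow_add]
      have e5 : a^(N-8) = a^(2*k) := by rw [hk]
      have e6 : b^(N-8) = b^(2*k) := by rw [hk]
      rw [hS8, hS6, hS4, e1, e2, e3, e4, e5, e6]
      generalize a^(2*k) = A
      generalize b^(2*k) = B
      rw [ha, hb, hc]
      have hD : (s*t)^8*t^12*((s^4-1)*(1-t^4)) ≠ 0 := by
        intro h; simp at h; tauto
      have h1 : ((s^2-t^2)/(s*t))^4*((1-s^2*t^2)/(s*t))^4*(A+B)
          = (s^2-t^2)^4*(1-s^2*t^2)^4*(A+B)*(t^12*((s^4-1)*(1-t^4)))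
            / ((s*t)^8*t^12*((s^4-1)*(1-t^4))) := by
        simp only [div_pow, div_mul_div_comm, mul_div_assoc', div_div, div_mul_eq_mul_div,
          ← add_div, div_sub_div_same]
        rw [div_eq_div_iff (by intro h; simp at h; tauto) hD]; ring
      have h2 : ((s^2-t^2)/(s*t))^2*((1-s^2*t^2)/(s*t))^2*((1-t^4)/t^2)^2*(A*((s^2-t^2)/(s*t))^2+B*((1-s^2*t^2)/(s*t))^2)
          = (s^2-t^2)^2*(1-s^2*t^2)^2*(1-t^4)^2*(A*(s^2-t^2)^2+B*(1-s^2*t^2)^2)*((s*t)^2*t^8*((s^4-1)*(1-t^4)))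
            / ((s*t)^8*t^12*((s^4-1)*(1-t^4))) := by
        simp only [div_pow, div_mul_div_comm, mul_div_assoc', div_div, div_mul_eq_mul_div,
          ← add_div, div_sub_div_same]
        rw [div_eq_div_iff (by intro h; simp at h; tauto) hD]; ring
      have h3 : 2*((s^2-t^2)/(s*t))^4*((1-s^2*t^2)/(s*t))^4*((1-t^4)/t^2)^2*((A-B)*(s^2*t^2)/((s^4-1)*(1-t^4)))
          = 2*(s^2-t^2)^4*(1-s^2*t^2)^4*(1-t^4)^2*((A-B)*(s^2*t^2))*t^8
            / ((s*t)^8*t^12*((s^4-1)*(1-t^4))) := by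
        simp only [div_pow, div_mul_div_comm, mul_div_assoc', div_div, div_mul_eq_mul_div,
          ← add_div, div_sub_div_same]
        rw [div_eq_div_iff (by intro h; simp at h; tauto) hD]; ring
      have h4 : 3*((s^2-t^2)/(s*t))^2*((1-s^2*t^2)/(s*t))^2*((1-t^4)/t^2)^4*((A*((s^2-t^2)/(s*t))^2-B*((1-s^2*t^2)/(s*t))^2)*(s^2*t^2)/((s^4-1)*(1-t^4)))
          = 3*(s^2-t^2)^2*(1-s^2*t^2)^2*(1-t^4)^4*((A*(s^2-t^2)^2-B*(1-s^2*t^2)^2)*(s^2*t^2))*((s*t)^2*t^4)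
            / ((s*t)^8*t^12*((s^4-1)*(1-t^4))) := by
        simp only [div_pow, div_mul_div_comm, mul_div_assoc', div_div, div_mul_eq_mul_div,
          ← add_div, div_sub_div_same]
        rw [div_eq_div_iff (by intro h; simp at h; tauto) hD]; ring
      have h5 : ((1-t^4)/t^2)^6*((A*((s^2-t^2)/(s*t))^4-B*((1-s^2*t^2)/(s*t))^4)*(s^2*t^2)/((s^4-1)*(1-t^4)))
          = (1-t^4)^6*((A*(s^2-t^2)^4-B*(1-s^2*t^2)^4)*(s^2*t^2))*(s*t)^4
            / ((s*t)^8*t^12*((s^4-1)*(1-t^4))) := by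
        simp only [div_pow, div_mul_div_comm, mul_div_assoc', div_div, div_mul_eq_mul_div,
          ← add_div, div_sub_div_same]
        rw [div_eq_div_iff (by intro h; simp at h; tauto) hD]; ring
      rw [h1, h2, h3, h4, h5, div_sub_div_same, ← add_div, div_sub_div_same,
        ← add_div]
      have hL : (A*((s^2-t^2)/(s*t))^7*((s^2*t^6-1)*(s^4*t^8-1))
          - B*((1-s^2*t^2)/(s*t))^7*((s^2-t^6)*(s^4-t^8)))
          = (A*(s^2-t^2)^7*((s^2*t^6-1)*(s^4*t^8-1))
            - B*(1-s^2*t^2)^7*((s^2-t^6)*(s^4-t^8))) / (s*t)^7 := by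
        simp only [div_pow, div_mul_div_comm, mul_div_assoc', div_div, div_mul_eq_mul_div,
          div_sub_div_same]
      rw [hL, div_div]
      rw [div_eq_div_iff (by intro h; simp at h; tauto) hD]
      ring
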